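/- Let p : ℕ → ℝ be nonnegative with ∑'_{k} p k = 1, and let c > 0 be such that p k ≤ c · k^(−3/2) for every k ≥ 1. Then for every n ≥ 1, the family k ↦ min(k, n) · p k is summable and ∑'_{k} min(k, n) · p k ≤ 4 · c · √n. -/

import Mathlib

open Finset

private lemma key1 (a b : ℝ) (ha : 0 ≤ a) (hb : 0 < b) (hab : a ≤ b)
    (h : b ^ 2 = a ^ 2 + 1) : b⁻¹ ≤ 2 * (b - a) := by
  rw [inv_eq_one_div, div_le_iff₀ hb]
  nlinarith

private lemma key2 (a b : ℝ) (ha : 0 < a) (hab : a ≤ b)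
    (h : b ^ 2 = a ^ 2 + 1) : (b ^ 2 * b)⁻¹ ≤ 2 * (a⁻¹ - b⁻¹) := by
  have hb : 0 < b := lt_of_lt_of_le ha hab
  have h1 : 1 ≤ 2 * b * (b - a) := by nlinarith
  have e : 2 * (a⁻¹ - b⁻¹) = 2 * (b - a) / (a * b) := by
    field_simp
  rw [e, inv_eq_one_div, div_le_div_iff₀ (by positivity) (by positivity)]
  nlinarith [mul_le_mul_of_nonneg_left h1 (sq_nonneg b),
    mul_le_mul_of_nonneg_right hab hb.le]

private lemma head_sum (n : ℕ) :
    ∑ k ∈ Icc 1 n, (Real.sqrt k)⁻¹ ≤ 2 * Real.sqrt n := by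
  induction n with
  | zero => simp
  | succ m ih =>
    rw [Finset.sum_Icc_succ_top (by omega : 1 ≤ m + 1)]
    have hcast : ((m + 1 : ℕ) : ℝ) = (m : ℝ) + 1 := by push_cast; ring
    have hb : 0 < Real.sqrt ((m:ℝ) + 1) := Real.sqrt_pos.2 (by positivity)
    have hab : Real.sqrt (m : ℝ) ≤ Real.sqrt ((m:ℝ) + 1) :=
      Real.sqrt_le_sqrt (by linarith)
    have hsq : (Real.sqrt ((m:ℝ)+1)) ^ 2 = (Real.sqrt (m:ℝ)) ^ 2 + 1 := by
      rw [Real.sq_sqrt (by positivity), Real.sq_sqrt (Nat.cast_nonneg m)]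
    have := key1 (Real.sqrt (m:ℝ)) (Real.sqrt ((m:ℝ)+1)) (Real.sqrt_nonneg _) hb hab hsq
    rw [hcast]
    linarith

private lemma tail_sum (n : ℕ) (hn : 1 ≤ n) (m : ℕ) :
    ∑ k ∈ Ioc n m, ((k : ℝ) * Real.sqrt k)⁻¹ ≤ 2 * (Real.sqrt n)⁻¹ := by
  have key : ∀ j : ℕ, ∑ k ∈ Ioc n (n + j), ((k : ℝ) * Real.sqrt k)⁻¹
      ≤ 2 * (Real.sqrt n)⁻¹ - 2 * (Real.sqrt ((n : ℝ) + j))⁻¹ := by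
    intro j
    induction j with
    | zero => simp
    | succ i ih =>
      rw [show n + (i + 1) = (n + i) + 1 from rfl,
        Finset.sum_Ioc_succ_top (by omega : n ≤ n + i)]
      have ha : 0 < Real.sqrt ((n : ℝ) + i) := Real.sqrt_pos.2 (by positivity)
      have hab : Real.sqrt ((n : ℝ) + i) ≤ Real.sqrt ((n : ℝ) + i + 1) :=
        Real.sqrt_le_sqrt (by linarith)
      have hsq : Real.sqrt ((n : ℝ) + i + 1) ^ 2 = Real.sqrt ((n : ℝ) + i) ^ 2 + 1 := by
        rw [Real.sq_sqrt (by positivity), Real.sq_sqrt (by positivity)]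
      have hk2 := key2 _ _ ha hab hsq
      have hterm : (((n + i + 1 : ℕ) : ℝ) * Real.sqrt ((n + i + 1 : ℕ) : ℝ))⁻¹
          = (Real.sqrt ((n : ℝ) + i + 1) ^ 2 * Real.sqrt ((n : ℝ) + i + 1))⁻¹ := by
        have hc : ((n + i + 1 : ℕ) : ℝ) = (n : ℝ) + i + 1 := by push_cast; ring
        rw [hc, Real.sq_sqrt (by positivity)]
      rw [hterm]
      have hcast2 : ((n : ℝ) + ((i + 1 : ℕ) : ℝ)) = (n : ℝ) + i + 1 := by push_cast; ring
      rw [hcast2]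
      linarith
  calc ∑ k ∈ Ioc n m, ((k : ℝ) * Real.sqrt k)⁻¹
      ≤ ∑ k ∈ Ioc n (n + m), ((k : ℝ) * Real.sqrt k)⁻¹ := by
        apply Finset.sum_le_sum_of_subset_of_nonneg
        · intro k hk
          simp only [Finset.mem_Ioc] at *
          omega
        · intro k _ _
          positivity
    _ ≤ 2 * (Real.sqrt n)⁻¹ - 2 * (Real.sqrt ((n : ℝ) + m))⁻¹ := key m
    _ ≤ 2 * (Real.sqrt n)⁻¹ := by
        have : 0 ≤ (Real.sqrt ((n : ℝ) + m))⁻¹ := by positivity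
        linarith

private lemma rpow_eq (k : ℕ) (hk : 1 ≤ k) :
    (k : ℝ) ^ (-(3 / 2) : ℝ) = ((k : ℝ) * Real.sqrt k)⁻¹ := by
  have hk0 : (0 : ℝ) < k := by exact_mod_cast hk
  rw [Real.rpow_neg hk0.le]
  congr 1
  rw [show (3 / 2 : ℝ) = 1 + 1 / 2 by norm_num, Real.rpow_add hk0, Real.rpow_one,
    ← Real.sqrt_eq_rpow]

theorem stmt_11 (p : ℕ → ℝ) (hnn : ∀ k, 0 ≤ p k) (hsum : ∑' k, p k = 1)
    (c : ℝ) (hc : 0 < c)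
    (hbound : ∀ k : ℕ, 1 ≤ k → p k ≤ c * (k : ℝ) ^ (-(3 / 2) : ℝ)) :
    ∀ n : ℕ, 1 ≤ n →
      Summable (fun k : ℕ => ((min k n : ℕ) : ℝ) * p k) ∧
      ∑' k : ℕ, ((min k n : ℕ) : ℝ) * p k ≤ 4 * c * Real.sqrt n := by
  intro n hn
  have hp : Summable p := by
    by_contra h
    rw [tsum_eq_zero_of_not_summable h] at hsum
    norm_num at hsum
  have hf_nonneg : ∀ k : ℕ, 0 ≤ ((min k n : ℕ) : ℝ) * p k := fun k =>
    mul_nonneg (by positivity) (hnn k)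
  have hf_le : ∀ k : ℕ, ((min k n : ℕ) : ℝ) * p k ≤ (n : ℝ) * p k := fun k =>
    mul_le_mul_of_nonneg_right (by exact_mod_cast Nat.min_le_right k n) (hnn k)
  have hf_summable : Summable (fun k : ℕ => ((min k n : ℕ) : ℝ) * p k) :=
    Summable.of_nonneg_of_le hf_nonneg hf_le (hp.mul_left _)
  refine ⟨hf_summable, ?_⟩
  apply Summable.tsum_le_of_sum_le hf_summable
  intro s
  set f : ℕ → ℝ := fun k => ((min k n : ℕ) : ℝ) * p k with hf_def
  set m : ℕ := max n (s.sup id) with hm_def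
  have hnm : n ≤ m := le_max_left _ _
  have hsub : s.erase 0 ⊆ Icc 1 m := by
    intro k hk
    simp only [Finset.mem_erase] at hk
    simp only [Finset.mem_Icc]
    refine ⟨by omega, ?_⟩
    calc k = id k := rfl
      _ ≤ s.sup id := Finset.le_sup hk.2
      _ ≤ m := le_max_right _ _
  have hsplit : Icc 1 m = Icc 1 n ∪ Ioc n m := by
    ext k
    simp only [Finset.mem_Icc, Finset.mem_union, Finset.mem_Ioc]
    omega
  have hdisj : Disjoint (Icc 1 n) (Ioc n m) := by
    rw [Finset.disjoint_left]
    intro k hk hk'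
    simp only [Finset.mem_Icc, Finset.mem_Ioc] at *
    omega
  have hhead : ∑ k ∈ Icc 1 n, f k ≤ 2 * c * Real.sqrt n := by
    calc ∑ k ∈ Icc 1 n, f k ≤ ∑ k ∈ Icc 1 n, c * (Real.sqrt k)⁻¹ := by
          apply Finset.sum_le_sum
          intro k hk
          simp only [Finset.mem_Icc] at hk
          have h1 : min k n = k := Nat.min_eq_left hk.2
          have hk0 : (0 : ℝ) < k := by exact_mod_cast hk.1
          have hsk : 0 < Real.sqrt k := Real.sqrt_pos.2 hk0
          have hb := hbound k hk.1
          rw [rpow_eq k hk.1] at hb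
          have : f k ≤ (k : ℝ) * (c * ((k : ℝ) * Real.sqrt k)⁻¹) := by
            rw [hf_def]
            simp only [h1]
            exact mul_le_mul_of_nonneg_left hb (by positivity)
          refine this.trans (le_of_eq ?_)
          field_simp
          try ring
      _ = c * ∑ k ∈ Icc 1 n, (Real.sqrt k)⁻¹ := by rw [Finset.mul_sum]
      _ ≤ c * (2 * Real.sqrt n) := by
          exact mul_le_mul_of_nonneg_left (head_sum n) hc.le
      _ = 2 * c * Real.sqrt n := by ring
  have htail : ∑ k ∈ Ioc n m, f k ≤ 2 * c * Real.sqrt n := by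
    have hn0 : (0 : ℝ) < n := by exact_mod_cast hn
    calc ∑ k ∈ Ioc n m, f k
        ≤ ∑ k ∈ Ioc n m, (n : ℝ) * (c * ((k : ℝ) * Real.sqrt k)⁻¹) := by
          apply Finset.sum_le_sum
          intro k hk
          simp only [Finset.mem_Ioc] at hk
          have h1 : min k n = n := Nat.min_eq_right (le_of_lt hk.1)
          have hk1 : 1 ≤ k := by omega
          have hb := hbound k hk1
          rw [rpow_eq k hk1] at hb
          rw [hf_def]
          simp only [h1]
          exact mul_le_mul_of_nonneg_left hb (by positivity)
      _ = (n : ℝ) * c * ∑ k ∈ Ioc n m, ((k : ℝ) * Real.sqrt k)⁻¹ := by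
          rw [Finset.mul_sum]
          apply Finset.sum_congr rfl
          intro k _; ring
      _ ≤ (n : ℝ) * c * (2 * (Real.sqrt n)⁻¹) := by
          apply mul_le_mul_of_nonneg_left (tail_sum n hn m) (by positivity)
      _ = 2 * c * ((n : ℝ) / Real.sqrt n) := by
          rw [div_eq_mul_inv]; ring
      _ = 2 * c * Real.sqrt n := by rw [Real.div_sqrt]
  calc ∑ k ∈ s, f k = ∑ k ∈ s.erase 0, f k := by
        rcases Finset.decidableMem 0 s with h | h
        · rw [Finset.erase_eq_of_notMem h]
        · rw [← Finset.sum_erase_add s f h]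
          have : f 0 = 0 := by simp [hf_def]
          rw [this, add_zero]
    _ ≤ ∑ k ∈ Icc 1 m, f k := by
        apply Finset.sum_le_sum_of_subset_of_nonneg hsub
        intro k _ _
        exact hf_nonneg k
    _ = ∑ k ∈ Icc 1 n, f k + ∑ k ∈ Ioc n m, f k := by
        rw [hsplit, Finset.sum_union hdisj]
    _ ≤ 2 * c * Real.sqrt n + 2 * c * Real.sqrt n := add_le_add hhead htail
    _ = 4 * c * Real.sqrt n := by ring
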